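/- The feasible set of the primal weighting problem is empty if and only if there exist (α, β, γ) ∈ ℝ^N × ℝ^T × ℝ^p such that α_i + β_t + ψ_itᵀγ ≥ 0 for all (i,t) and W_it = 1{α_i + β_t + ψ_itᵀγ > 0} for all (i,t). -/

import Mathlib

open scoped BigOperators

lemma farkas_aux {ι : Type*} [Fintype ι] [DecidableEq ι] :
    ∀ (n : ℕ) (S : Finset ι) (V : Submodule ℝ (ι → ℝ)) (k : ι), S.card = n → k ∈ S →
    (∀ ω ∈ V, (∀ j ∈ S, 0 ≤ ω j) → ω k ≤ 0) →
    ∃ s : ι → ℝ, (∀ ω ∈ V, ∑ j, s j * ω j = 0) ∧ (∀ j ∉ S, s j = 0) ∧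
      (∀ j ∈ S, 0 ≤ s j) ∧ 0 < s k := by
  intro n
  induction n with
  | zero =>
    intro S V k hcard hk _
    rw [Finset.card_eq_zero] at hcard
    subst hcard; simp at hk
  | succ n ih =>
    intro S V k hcard hk H
    by_cases hone : ∀ m ∈ S, m = k
    · -- base case: S = {k}
      have hωk : ∀ ω ∈ V, ω k = 0 := by
        intro ω hω
        rcases le_or_gt 0 (ω k) with h | h
        · have h1 := H ω hω (fun j hj => by rw [hone j hj]; exact h)
          linarith
        · have h2 := H (-ω) (V.neg_mem hω) (fun j hj => by
            rw [hone j hj]; simp; linarith)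
          simp at h2; linarith
      refine ⟨fun j => if j = k then 1 else 0, ?_, ?_, ?_, by simp⟩
      · intro ω hω
        simp [ite_mul, Finset.sum_ite_eq', hωk ω hω]
      · intro j hj
        have : j ≠ k := fun h => hj (h ▸ hk)
        simp [this]
      · intro j _; positivity
    · push_neg at hone
      obtain ⟨m, hmS, hmk⟩ := hone
      have hkS' : k ∈ S.erase m := Finset.mem_erase.mpr ⟨Ne.symm hmk, hk⟩
      have hcard' : (S.erase m).card = n := by
        rw [Finset.card_erase_of_mem hmS, hcard]; rfl
      by_cases hc : ∀ ω ∈ V, (∀ j ∈ S.erase m, 0 ≤ ω j) → ω k ≤ 0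
      · obtain ⟨s, hs1, hs2, hs3, hs4⟩ := ih (S.erase m) V k hcard' hkS' hc
        refine ⟨s, hs1, fun j hj => hs2 j (fun h => hj (Finset.mem_of_mem_erase h)),
          fun j hj => ?_, hs4⟩
        rcases eq_or_ne j m with rfl | hne
        · rw [hs2 j (Finset.notMem_erase j S)]
        · exact hs3 j (Finset.mem_erase.mpr ⟨hne, hj⟩)
      · push_neg at hc
        obtain ⟨ω0, hω0V, hω0nn, hω0k⟩ := hc
        have hω0m : ω0 m < 0 := by
          by_contra h; push_neg at h
          have := H ω0 hω0V (fun j hj => by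
            rcases eq_or_ne j m with rfl | hne
            · exact h
            · exact hω0nn j (Finset.mem_erase.mpr ⟨hne, hj⟩))
          linarith
        have hc0 : ω0 m ≠ 0 := ne_of_lt hω0m
        set U : Submodule ℝ (ι → ℝ) := V ⊓ LinearMap.ker (LinearMap.proj (R := ℝ) (φ := fun _ : ι => ℝ) m) with hU
        have hUmem : ∀ ω : ι → ℝ, ω ∈ U ↔ ω ∈ V ∧ ω m = 0 := by
          intro ω
          simp [hU, Submodule.mem_inf, LinearMap.mem_ker]
        have hHU : ∀ ω ∈ U, (∀ j ∈ S.erase m, 0 ≤ ω j) → ω k ≤ 0 := by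
          intro ω hω hnn
          obtain ⟨hωV, hωm⟩ := (hUmem ω).mp hω
          refine H ω hωV (fun j hj => ?_)
          rcases eq_or_ne j m with rfl | hne
          · rw [hωm]
          · exact hnn j (Finset.mem_erase.mpr ⟨hne, hj⟩)
        obtain ⟨s', h1, h2, h3, h4⟩ := ih (S.erase m) U k hcard' hkS' hHU
        set a : ℝ := (∑ j, s' j * ω0 j) / ω0 m with ha
        have key : ∀ ω ∈ V, ∑ j, s' j * ω j = a * ω m := by
          intro ω hω
          have hu : ω - (ω m / ω0 m) • ω0 ∈ U := by
            rw [hUmem]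
            constructor
            · exact V.sub_mem hω (V.smul_mem _ hω0V)
            · simp only [Pi.sub_apply, Pi.smul_apply, smul_eq_mul]
              field_simp
              simp
          have h0 := h1 _ hu
          simp only [Pi.sub_apply, Pi.smul_apply, smul_eq_mul, mul_sub,
            Finset.sum_sub_distrib] at h0
          have : ∑ j, s' j * ((ω m / ω0 m) * ω0 j) = (ω m / ω0 m) * ∑ j, s' j * ω0 j := by
            rw [Finset.mul_sum]; congr 1; ext j; ring
          rw [this] at h0
          have := sub_eq_zero.mp h0
          rw [this, ha]; field_simp
        refine ⟨fun j => if j = m then -a else s' j, ?_, ?_, ?_, ?_⟩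
        · intro ω hω
          have expand : ∀ j, (if j = m then -a else s' j) * ω j
              = s' j * ω j + (if j = m then (-a) * ω j else 0) := by
            intro j
            rcases eq_or_ne j m with rfl | hne
            · simp [h2 j (Finset.notMem_erase j S)]
            · simp [hne]
          simp only [expand, Finset.sum_add_distrib]
          rw [key ω hω, Finset.sum_ite_eq' Finset.univ m (fun j => -a * ω j)]
          simp
        · intro j hj
          have hjm : j ≠ m := fun h => hj (h ▸ hmS)
          show (if j = m then -a else s' j) = 0
          rw [if_neg hjm]
          exact h2 j (fun h => hj (Finset.mem_of_mem_erase h))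
        · intro j hj
          show 0 ≤ if j = m then -a else s' j
          by_cases hjm : j = m
          · rw [if_pos hjm]
            have hnum : 0 ≤ ∑ i, s' i * ω0 i := by
              refine Finset.sum_nonneg (fun i _ => ?_)
              by_cases hi : i ∈ S.erase m
              · exact mul_nonneg (h3 i hi) (hω0nn i hi)
              · rw [h2 i hi]; simp
            have : a ≤ 0 := div_nonpos_of_nonneg_of_nonpos hnum (le_of_lt hω0m)
            linarith
          · rw [if_neg hjm]
            exact h3 j (Finset.mem_erase.mpr ⟨hjm, hj⟩)
        · show 0 < if k = m then -a else s' k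
          rw [if_neg (Ne.symm hmk)]
          exact h4

variable (N T p : ℕ)

def constraintSubmodule (ψ : Fin N → Fin T → Fin p → ℝ) :
    Submodule ℝ ((Fin N × Fin T) → ℝ) where
  carrier := {ω | (∀ t, ∑ i, ω (i, t) = 0) ∧ (∀ i, ∑ t, ω (i, t) = 0) ∧
    (∀ j, ∑ q : Fin N × Fin T, ω q * ψ q.1 q.2 j = 0)}
  add_mem' := by
    rintro a b ⟨ha1, ha2, ha3⟩ ⟨hb1, hb2, hb3⟩
    refine ⟨fun t => ?_, fun i => ?_, fun j => ?_⟩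
    · simp [Finset.sum_add_distrib, ha1 t, hb1 t]
    · simp [Finset.sum_add_distrib, ha2 i, hb2 i]
    · simp [add_mul, Finset.sum_add_distrib, ha3 j, hb3 j]
  zero_mem' := by
    refine ⟨fun t => ?_, fun i => ?_, fun j => ?_⟩ <;> simp
  smul_mem' := by
    rintro c a ⟨h1, h2, h3⟩
    refine ⟨fun t => ?_, fun i => ?_, fun j => ?_⟩
    · simp [← Finset.mul_sum, h1 t]
    · simp [← Finset.mul_sum, h2 i]
    · simp only [Pi.smul_apply, smul_eq_mul, mul_assoc, ← Finset.mul_sum, h3 j, mul_zero]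

def patternSubmodule (ψ : Fin N → Fin T → Fin p → ℝ) :
    Submodule ℝ (EuclideanSpace ℝ (Fin N × Fin T)) where
  carrier := {s | ∃ (α : Fin N → ℝ) (β : Fin T → ℝ) (γ : Fin p → ℝ),
    ∀ q : Fin N × Fin T, s q = α q.1 + β q.2 + ∑ j, ψ q.1 q.2 j * γ j}
  add_mem' := by
    rintro a b ⟨α, β, γ, h⟩ ⟨α', β', γ', h'⟩
    refine ⟨α + α', β + β', γ + γ', fun q => ?_⟩
    have : (a + b) q = a q + b q := rfl
    rw [this, h q, h' q]
    simp [mul_add, Finset.sum_add_distrib]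
    ring
  zero_mem' := ⟨0, 0, 0, fun q => by simp⟩
  smul_mem' := by
    rintro c a ⟨α, β, γ, h⟩
    refine ⟨c • α, c • β, c • γ, fun q => ?_⟩
    have : (c • a) q = c * a q := rfl
    rw [this, h q]
    simp [mul_add, Finset.mul_sum]
    ring_nf

lemma pattern_of_orth (ψ : Fin N → Fin T → Fin p → ℝ) (s : (Fin N × Fin T) → ℝ)
    (hs : ∀ ω ∈ constraintSubmodule N T p ψ, ∑ q : Fin N × Fin T, s q * ω q = 0) :
    ∃ (α : Fin N → ℝ) (β : Fin T → ℝ) (γ : Fin p → ℝ),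
      ∀ q : Fin N × Fin T, s q = α q.1 + β q.2 + ∑ j, ψ q.1 q.2 j * γ j := by
  classical
  set K := patternSubmodule N T p ψ with hK
  have hmem : (WithLp.toLp 2 s : EuclideanSpace ℝ (Fin N × Fin T)) ∈ Kᗮᗮ := by
    rw [Submodule.mem_orthogonal]
    intro v hv
    rw [Submodule.mem_orthogonal] at hv
    -- v satisfies the constraints
    have hrow : ∀ i : Fin N, ∑ t, v (i, t) = 0 := by
      intro i
      have hg : (WithLp.toLp 2 (fun q : Fin N × Fin T => if q.1 = i then (1:ℝ) else 0) :
          EuclideanSpace ℝ (Fin N × Fin T)) ∈ K :=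
        ⟨fun i' => if i' = i then 1 else 0, 0, 0, fun q => by simp⟩
      have := hv _ hg
      simpa [PiLp.inner_apply, RCLike.inner_apply, conj_trivial, ite_mul,
        Fintype.sum_prod_type_right, Finset.sum_ite_eq'] using this
    have hcol : ∀ t : Fin T, ∑ i, v (i, t) = 0 := by
      intro t
      have hg : (WithLp.toLp 2 (fun q : Fin N × Fin T => if q.2 = t then (1:ℝ) else 0) :
          EuclideanSpace ℝ (Fin N × Fin T)) ∈ K :=
        ⟨0, fun t' => if t' = t then 1 else 0, 0, fun q => by simp⟩
      have := hv _ hg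
      simpa [PiLp.inner_apply, RCLike.inner_apply, conj_trivial, ite_mul,
        Fintype.sum_prod_type, Finset.sum_ite_eq'] using this
    have hmom : ∀ j : Fin p, ∑ q : Fin N × Fin T, v q * ψ q.1 q.2 j = 0 := by
      intro j
      have hg : (WithLp.toLp 2 (fun q : Fin N × Fin T => ψ q.1 q.2 j) :
          EuclideanSpace ℝ (Fin N × Fin T)) ∈ K :=
        ⟨0, 0, fun j' => if j' = j then 1 else 0, fun q => by
          simp [mul_ite, Finset.sum_ite_eq']⟩
      have := hv _ hg
      simp only [PiLp.inner_apply, RCLike.inner_apply, conj_trivial, PiLp.toLp_apply] at this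
      rw [← this]
    have hvV : (v : (Fin N × Fin T) → ℝ) ∈ constraintSubmodule N T p ψ :=
      ⟨hcol, hrow, hmom⟩
    have := hs v hvV
    simp only [PiLp.inner_apply, RCLike.inner_apply, conj_trivial, PiLp.toLp_apply]
    rw [← this]
  rw [Submodule.orthogonal_orthogonal] at hmem
  exact hmem

lemma mem_constraintSubmodule {N T p : ℕ} {ψ : Fin N → Fin T → Fin p → ℝ}
    {ω : (Fin N × Fin T) → ℝ} :
    ω ∈ constraintSubmodule N T p ψ ↔
      (∀ t, ∑ i, ω (i, t) = 0) ∧ (∀ i, ∑ t, ω (i, t) = 0) ∧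
      (∀ j, ∑ q : Fin N × Fin T, ω q * ψ q.1 q.2 j = 0) := Iff.rfl


/-- **Lemma 1 (Farkas characterization of infeasibility).**
The feasible set of the primal weighting problem is empty if and only if there
exist `(α, β, γ) ∈ ℝ^N × ℝ^T × ℝ^p` with `α_i + β_t + ψ_itᵀγ ≥ 0` for all
`(i,t)` and `W_it = 1{α_i + β_t + ψ_itᵀγ > 0}` for all `(i,t)`. -/
theorem primal_feasible_empty_iff_separation
    (N T p : ℕ) (hN : 0 < N) (hT : 0 < T)
    (W : Fin N → Fin T → ℝ) (hW01 : ∀ i t, W i t = 0 ∨ W i t = 1)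
    (ψ : Fin N → Fin T → Fin p → ℝ) :
    {ω : Fin N → Fin T → ℝ |
      1 ≤ (1 / ((N : ℝ) * T)) * ∑ i, ∑ t, ω i t * W i t ∧
      (∀ t, ∑ i, ω i t = 0) ∧
      (∀ i, ∑ t, ω i t = 0) ∧
      (∀ j, (1 / ((N : ℝ) * T)) * ∑ i, ∑ t, ω i t * ψ i t j = 0) ∧
      (∀ i t, 0 ≤ ω i t * W i t)} = ∅ ↔
    ∃ (α : Fin N → ℝ) (β : Fin T → ℝ) (γ : Fin p → ℝ),
      (∀ i t, 0 ≤ α i + β t + ∑ j, ψ i t j * γ j) ∧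
      (∀ i t, W i t = if 0 < α i + β t + ∑ j, ψ i t j * γ j then 1 else 0) := by
  classical
  have hNT : (0:ℝ) < (N:ℝ) * T := by
    have h1 : (0:ℝ) < (N:ℝ) := by exact_mod_cast hN
    have h2 : (0:ℝ) < (T:ℝ) := by exact_mod_cast hT
    exact mul_pos h1 h2
  constructor
  · -- hard direction
    intro hempty
    have hempty' := Set.eq_empty_iff_forall_notMem.mp hempty
    set S : Finset (Fin N × Fin T) := Finset.univ.filter (fun q => W q.1 q.2 = 1) with hS
    have hWS1 : ∀ q ∈ S, W q.1 q.2 = 1 := fun q hq => (Finset.mem_filter.mp hq).2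
    have hWS0 : ∀ q : Fin N × Fin T, q ∉ S → W q.1 q.2 = 0 := by
      intro q hq
      rcases hW01 q.1 q.2 with h | h
      · exact h
      · exact absurd (Finset.mem_filter.mpr ⟨Finset.mem_univ q, h⟩) hq
    set V := constraintSubmodule N T p ψ with hV
    -- key hypothesis for Farkas, for each treated coordinate
    have Hk : ∀ k ∈ S, ∀ ω ∈ V, (∀ j ∈ S, 0 ≤ ω j) → ω k ≤ 0 := by
      intro k hkS ω hωV hnn
      by_contra hpos
      push_neg at hpos
      obtain ⟨hcol, hrow, hmom⟩ := mem_constraintSubmodule.mp hωV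
      set σ : ℝ := ∑ q : Fin N × Fin T, ω q * W q.1 q.2 with hσ
      have hσ_eq : σ = ∑ q ∈ S, ω q := by
        rw [hσ, ← Finset.sum_subset (Finset.subset_univ S)
          (fun q _ hq => by rw [hWS0 q hq, mul_zero])]
        exact Finset.sum_congr rfl (fun q hq => by rw [hWS1 q hq, mul_one])
      have hσpos : 0 < σ := by
        rw [hσ_eq]
        exact lt_of_lt_of_le hpos (Finset.single_le_sum (fun q hq => hnn q hq) hkS)
      set c : ℝ := (N:ℝ) * T / σ with hc
      have hcpos : 0 < c := div_pos hNT hσpos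
      refine hempty' (fun i t => c * ω (i, t)) ⟨?_, ?_, ?_, ?_, ?_⟩
      · have hsum1 : ∑ i, ∑ t, (c * ω (i, t)) * W i t = c * σ := by
          rw [hσ, Finset.mul_sum, Fintype.sum_prod_type]
          exact Finset.sum_congr rfl (fun i _ => Finset.sum_congr rfl (fun t _ => by ring))
        rw [hsum1, hc]
        field_simp
        exact le_refl 1
      · intro t
        rw [← Finset.mul_sum, hcol t, mul_zero]
      · intro i
        rw [← Finset.mul_sum, hrow i, mul_zero]
      · intro j
        have : ∑ i, ∑ t, (c * ω (i, t)) * ψ i t j = c * ∑ q : Fin N × Fin T, ω q * ψ q.1 q.2 j := by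
          rw [Finset.mul_sum, Fintype.sum_prod_type]
          exact Finset.sum_congr rfl (fun i _ => Finset.sum_congr rfl (fun t _ => by ring))
        rw [this, hmom j, mul_zero, mul_zero]
      · intro i t
        by_cases hq : (i, t) ∈ S
        · have h1 := hWS1 _ hq
          have h2 := hnn _ hq
          rw [h1, mul_one]
          exact mul_nonneg (le_of_lt hcpos) h2
        · rw [hWS0 _ hq, mul_zero]
    -- apply Farkas for each k and sum
    have hex : ∀ k : Fin N × Fin T, ∃ s : (Fin N × Fin T) → ℝ,
        (∀ ω ∈ V, ∑ q, s q * ω q = 0) ∧ (∀ j ∉ S, s j = 0) ∧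
        (∀ j ∈ S, 0 ≤ s j) ∧ (k ∈ S → 0 < s k) := by
      intro k
      by_cases hk : k ∈ S
      · obtain ⟨s, h1, h2, h3, h4⟩ := farkas_aux S.card S V k rfl hk (Hk k hk)
        exact ⟨s, h1, h2, h3, fun _ => h4⟩
      · exact ⟨0, fun ω _ => by simp, fun j _ => rfl, fun j _ => le_refl 0,
          fun h => absurd h hk⟩
    choose f hf using hex
    set s : (Fin N × Fin T) → ℝ := fun q => ∑ k ∈ S, f k q with hsdef
    have hsorth : ∀ ω ∈ V, ∑ q, s q * ω q = 0 := by
      intro ω hω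
      simp only [hsdef, Finset.sum_mul]
      rw [Finset.sum_comm]
      exact Finset.sum_eq_zero fun k _ => (hf k).1 ω hω
    have hs0 : ∀ q ∉ S, s q = 0 := fun q hq =>
      Finset.sum_eq_zero fun k _ => (hf k).2.1 q hq
    have hspos : ∀ q ∈ S, 0 < s q := fun q hq =>
      Finset.sum_pos' (fun k _ => (hf k).2.2.1 q hq) ⟨q, hq, (hf q).2.2.2 hq⟩
    obtain ⟨α, β, γ, hαβγ⟩ := pattern_of_orth N T p ψ s hsorth
    refine ⟨α, β, γ, ?_, ?_⟩
    · intro i t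
      rw [← hαβγ (i, t)]
      by_cases h : (i, t) ∈ S
      · exact le_of_lt (hspos _ h)
      · rw [hs0 _ h]
    · intro i t
      by_cases h : (i, t) ∈ S
      · have : 0 < α i + β t + ∑ j, ψ i t j * γ j := by
          rw [← hαβγ (i, t)]; exact hspos _ h
        rw [if_pos this]
        exact hWS1 _ h
      · have h0 : α i + β t + ∑ j, ψ i t j * γ j = 0 := by
          rw [← hαβγ (i, t)]; exact hs0 _ h
        rw [h0, hWS0 _ h]
        simp
  · -- easy direction
    rintro ⟨α, β, γ, hnn, hind⟩
    rw [Set.eq_empty_iff_forall_notMem]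
    rintro ω ⟨ha, hb, hc, hd, he⟩
    set s : Fin N → Fin T → ℝ := fun i t => α i + β t + ∑ j, ψ i t j * γ j with hsdef
    -- each term is nonneg, and where W=1 the slack is positive
    have hWpos : ∀ i t, W i t = 1 → 0 < s i t := by
      intro i t hW
      by_contra hns
      rw [hind i t] at hW
      rw [if_neg hns] at hW
      exact one_ne_zero hW.symm
    have hW0 : ∀ i t, W i t = 0 → s i t = 0 := by
      intro i t hW
      rw [hind i t] at hW
      by_cases hcond : 0 < s i t
      · rw [if_pos hcond] at hW; exact absurd hW one_ne_zero
      · exact le_antisymm (not_lt.mp hcond) (hnn i t)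
    have hterm : ∀ i t, 0 ≤ ω i t * s i t := by
      intro i t
      rcases hW01 i t with h | h
      · rw [hW0 i t h, mul_zero]
      · have hω : 0 ≤ ω i t := by have := he i t; rwa [h, mul_one] at this
        exact mul_nonneg hω (le_of_lt (hWpos i t h))
    -- the total inner product vanishes
    have hd' : ∀ j, ∑ i, ∑ t, ω i t * ψ i t j = 0 := by
      intro j
      have h1ne : (1/((N:ℝ)*T)) ≠ 0 := by positivity
      rcases mul_eq_zero.mp (hd j) with h | h
      · exact absurd h h1ne
      · exact h
    have hzero : ∑ i, ∑ t, ω i t * s i t = 0 := by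
      have expand : ∀ i t, ω i t * s i t
          = ω i t * α i + ω i t * β t + ∑ j, ω i t * ψ i t j * γ j := by
        intro i t
        rw [hsdef]
        simp only [mul_add, Finset.mul_sum]
        congr 1
        exact Finset.sum_congr rfl (fun j _ => by ring)
      simp only [expand, Finset.sum_add_distrib]
      have t1 : ∑ i, ∑ t, ω i t * α i = 0 := by
        refine Finset.sum_eq_zero fun i _ => ?_
        rw [← Finset.sum_mul, hc i, zero_mul]
      have t2 : ∑ i, ∑ t, ω i t * β t = 0 := by
        rw [Finset.sum_comm]
        refine Finset.sum_eq_zero fun t _ => ?_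
        rw [← Finset.sum_mul, hb t, zero_mul]
      have t3 : ∑ i, ∑ t, ∑ j, ω i t * ψ i t j * γ j = 0 := by
        have swap1 : ∑ i, ∑ t, ∑ j, ω i t * ψ i t j * γ j
            = ∑ j, ∑ i, ∑ t, ω i t * ψ i t j * γ j :=
          calc ∑ i, ∑ t, ∑ j, ω i t * ψ i t j * γ j
              = ∑ i, ∑ j, ∑ t, ω i t * ψ i t j * γ j :=
                Finset.sum_congr rfl fun i _ => Finset.sum_comm
            _ = ∑ j, ∑ i, ∑ t, ω i t * ψ i t j * γ j := Finset.sum_comm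
        rw [swap1]
        refine Finset.sum_eq_zero fun j _ => ?_
        have : ∑ i, ∑ t, ω i t * ψ i t j * γ j
            = (∑ i, ∑ t, ω i t * ψ i t j) * γ j := by
          rw [Finset.sum_mul]
          exact Finset.sum_congr rfl (fun i _ => by rw [Finset.sum_mul])
        rw [this, hd' j, zero_mul]
      rw [t1, t2, t3]; ring
    -- but some term is strictly positive
    have hA : (N:ℝ) * T ≤ ∑ i, ∑ t, ω i t * W i t := by
      rw [one_div, inv_mul_eq_div, le_div_iff₀ hNT] at ha
      linarith
    have hwit : ∃ i t, 0 < ω i t * W i t := by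
      by_contra h
      push_neg at h
      have : ∑ i, ∑ t, ω i t * W i t ≤ 0 :=
        Finset.sum_nonpos fun i _ => Finset.sum_nonpos fun t _ => h i t
      linarith
    obtain ⟨i0, t0, hwit⟩ := hwit
    have hW1 : W i0 t0 = 1 := by
      rcases hW01 i0 t0 with h | h
      · rw [h, mul_zero] at hwit; exact absurd hwit (lt_irrefl 0)
      · exact h
    have hω0 : 0 < ω i0 t0 := by rwa [hW1, mul_one] at hwit
    have hterm0 : 0 < ω i0 t0 * s i0 t0 := mul_pos hω0 (hWpos i0 t0 hW1)
    have : 0 < ∑ i, ∑ t, ω i t * s i t := by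
      refine Finset.sum_pos' (fun i _ => Finset.sum_nonneg fun t _ => hterm i t)
        ⟨i0, Finset.mem_univ i0, ?_⟩
      exact Finset.sum_pos' (fun t _ => hterm i0 t) ⟨t0, Finset.mem_univ t0, hterm0⟩
    linarith
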